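/- Let n ≥ 3 be an integer, H a nonzero real constant, and let (x, y, θ) be a Delaunay generating curve on an interval I whose force F vanishes identically. Then θ'(t) = −H for all t ∈ I, and there is a real constant c such that (x(t) − c)² + y(t)² = 1/H² for all t ∈ I; i.e., the generating curve is an arc of a circle of radius 1/|H| centered at the point (c, 0) on the axis (this is the sphere case of the Delaunay classification). -/

import Mathlib

open Real Set

/-- For a Delaunay generating curve `(x, y, θ)` on an interval `I`
with `H ≠ 0` and identically vanishing force, we have `θ'(t) = -H` on `I` and
there is `c : ℝ` with `(x(t) - c)² + y(t)² = 1/H²` on `I`: the generating curve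
is an arc of a circle of radius `1/|H|` centered on the axis (the sphere case). -/
theorem sphere_case
    (n : ℕ) (hn : 3 ≤ n) (H : ℝ) (hH : H ≠ 0) (I : Set ℝ) (hI : I.OrdConnected)
    (x y θ : ℝ → ℝ)
    (hypos : ∀ t ∈ I, 0 < y t)
    (hx : ∀ t ∈ I, HasDerivWithinAt x (Real.cos (θ t)) I t)
    (hy : ∀ t ∈ I, HasDerivWithinAt y (Real.sin (θ t)) I t)
    (hθ : ∀ t ∈ I, HasDerivWithinAt θ
      (-((n : ℝ) - 1) * H + ((n : ℝ) - 2) * Real.cos (θ t) / y t) I t)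
    (hF : ∀ t ∈ I, y t ^ (n - 2) * (Real.cos (θ t) - H * y t) = 0) :
    (∀ t ∈ I, HasDerivWithinAt θ (-H) I t) ∧
    ∃ c : ℝ, ∀ t ∈ I, (x t - c) ^ 2 + y t ^ 2 = 1 / H ^ 2 := by
  have hcos : ∀ t ∈ I, Real.cos (θ t) = H * y t := by
    intro t ht
    have hy0 : (0:ℝ) < y t := hypos t ht
    have hpow : (0:ℝ) < y t ^ (n - 2) := pow_pos hy0 _
    have := hF t ht
    have h2 : Real.cos (θ t) - H * y t = 0 := by
      rcases mul_eq_zero.1 this with h | h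
      · exact absurd h hpow.ne'
      · exact h
    linarith
  have hθ' : ∀ t ∈ I, HasDerivWithinAt θ (-H) I t := by
    intro t ht
    have hy0 : y t ≠ 0 := (hypos t ht).ne'
    have := hθ t ht
    rw [hcos t ht] at this
    convert this using 1
    field_simp
    ring
  refine ⟨hθ', ?_⟩
  rcases Set.eq_empty_or_nonempty I with hE | ⟨t0, ht0⟩
  · exact ⟨0, by simp [hE]⟩
  set g : ℝ → ℝ := fun t => x t + Real.sin (θ t) / H with hg
  have hg' : ∀ t ∈ I, HasDerivWithinAt g 0 I t := by
    intro t ht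
    have h1 : HasDerivWithinAt (fun t => Real.sin (θ t)) (Real.cos (θ t) * (-H)) I t :=
      (Real.hasDerivAt_sin (θ t)).comp_hasDerivWithinAt t (hθ' t ht)
    have h2 := (hx t ht).add (h1.div_const H)
    convert h2 using 1
    all_goals first | rfl | (rw [mul_neg, neg_div, mul_div_assoc, div_self hH]; ring)
  have hconst : ∀ t ∈ I, g t = g t0 := by
    intro t ht
    have hconv : Convex ℝ I := hI.convex
    have := hconv.norm_image_sub_le_of_norm_hasDerivWithin_le
      (f := g) (f' := fun _ => (0:ℝ)) (C := 0) hg' (fun _ _ => by simp) ht0 ht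
    have h0 : ‖g t - g t0‖ ≤ 0 := by simpa using this
    have h1 := le_antisymm h0 (norm_nonneg _)
    rw [norm_eq_zero, sub_eq_zero] at h1
    exact h1
  refine ⟨g t0, fun t ht => ?_⟩
  have h1 : x t - g t0 = -(Real.sin (θ t) / H) := by
    rw [← hconst t ht]; simp [hg]
  have h2 : y t = Real.cos (θ t) / H := by
    rw [hcos t ht]; field_simp
  rw [h1, h2]
  have hsc := Real.sin_sq_add_cos_sq (θ t)
  field_simp
  linarith [hsc]
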